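/- Let 0 < μ < 2/5 and let n ≥ 1 be an integer. Then G_n = Σ_{k=0}^{∞} C(−1/2, k) · I_{n,k} · μ^{2k}, where C(−1/2, k) denotes the generalized binomial coefficient, and the series converges. -/

import Mathlib

open Real MeasureTheory
open Set Filter

/-- The hyper-geometric integral `G_n = ∫₀^{π/2} t sin(nt)/√(1+(μt)²) dt`. -/
noncomputable def G (μ : ℝ) (n : ℕ) : ℝ :=
  ∫ t in (0:ℝ)..(π / 2), t * Real.sin ((n : ℝ) * t) / Real.sqrt (1 + (μ * t) ^ 2)

/-- `I_{n,k} = ∫₀^{π/2} t^{2k+1} sin(nt) dt`. -/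
noncomputable def I (n k : ℕ) : ℝ :=
  ∫ t in (0:ℝ)..(π / 2), t ^ (2 * k + 1) * Real.sin ((n : ℝ) * t)

/-- Generalized binomial coefficient `C(x, k) = x(x-1)⋯(x-k+1)/k!`. -/
noncomputable def genBinom (x : ℝ) (k : ℕ) : ℝ :=
  (∏ i ∈ Finset.range k, (x - (i : ℝ))) / (Nat.factorial k : ℝ)


noncomputable def pc (k : ℕ) : ℝ := ∏ i ∈ Finset.range k, (-(1:ℝ)/2 - i)

lemma pc_succ (k : ℕ) : pc (k+1) = pc k * (-(1:ℝ)/2 - k) := Finset.prod_range_succ _ _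

lemma pc_abs (k : ℕ) : |pc k| ≤ (Nat.factorial k : ℝ) := by
  induction k with
  | zero => simp [pc]
  | succ k ih =>
    rw [pc_succ, abs_mul, Nat.factorial_succ]
    push_cast
    have h1 : |(-(1:ℝ)/2 - k)| ≤ (k+1 : ℝ) := by
      have hk : (0:ℝ) ≤ k := Nat.cast_nonneg k
      rw [abs_of_nonpos (by linarith)]
      linarith
    calc |pc k| * |(-(1:ℝ)/2 - k)| ≤ (Nat.factorial k : ℝ) * (k+1) :=
          mul_le_mul ih h1 (abs_nonneg _) (by positivity)
      _ = (k+1) * (Nat.factorial k : ℝ) := by ring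

noncomputable def f12 : ℝ → ℝ := fun t => (1+t) ^ (-(1:ℝ)/2)

lemma hasDerivAt_aux (p : ℝ) (t : ℝ) (ht : 0 ≤ t) :
    HasDerivAt (fun t : ℝ => (1+t) ^ p) (p * (1+t) ^ (p-1)) t := by
  have h1 : HasDerivAt (fun t : ℝ => 1 + t) 1 t := (hasDerivAt_id t).const_add 1
  have h2 := Real.hasDerivAt_rpow_const (x := 1 + t) (p := p) (Or.inl (by linarith))
  have := h2.comp t h1; rw [mul_one] at this; exact this

lemma contDiffOn_f12 (n : ℕ∞) {b : ℝ} : ContDiffOn ℝ n f12 (Icc 0 b) := by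
  intro x hx
  have h1x : (1:ℝ) + x ≠ 0 := by nlinarith [hx.1]
  have : ContDiffAt ℝ n (fun y : ℝ => y ^ (-(1:ℝ)/2)) (1 + x) :=
    Real.contDiffAt_rpow_const_of_ne h1x
  exact (this.comp x ((contDiff_const.add contDiff_id).contDiffAt)).contDiffWithinAt

lemma itd {b : ℝ} (hb : 0 < b) (k : ℕ) :
    ∀ x ∈ Icc (0:ℝ) b, iteratedDerivWithin k f12 (Icc 0 b) x
      = pc k * (1+x) ^ (-(1:ℝ)/2 - k) := by
  induction k with
  | zero =>
    intro x hx
    simp [pc, f12]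
  | succ k ih =>
    intro x hx
    have hu : UniqueDiffOn ℝ (Icc (0:ℝ) b) := uniqueDiffOn_Icc hb
    rw [iteratedDerivWithin_succ]
    have hcongr : derivWithin (iteratedDerivWithin k f12 (Icc 0 b)) (Icc 0 b) x
        = derivWithin (fun t => pc k * (1+t) ^ (-(1:ℝ)/2 - k)) (Icc 0 b) x :=
      derivWithin_congr ih (ih x hx)
    rw [hcongr]
    have hd : HasDerivAt (fun t : ℝ => pc k * (1+t) ^ (-(1:ℝ)/2 - k))
        (pc k * ((-(1:ℝ)/2 - k) * (1+x) ^ (-(1:ℝ)/2 - k - 1))) x :=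
      (hasDerivAt_aux (-(1:ℝ)/2 - k) x hx.1).const_mul _
    rw [(hd.hasDerivWithinAt).derivWithin (hu x hx)]
    rw [pc_succ]
    push_cast
    ring_nf

lemma genBinom_eq (k : ℕ) : genBinom (-(1:ℝ)/2) k = pc k / (Nat.factorial k : ℝ) := rfl

lemma genBinom_abs (k : ℕ) : |genBinom (-(1:ℝ)/2) k| ≤ 1 := by
  rw [genBinom_eq, abs_div, abs_of_nonneg (by positivity : (0:ℝ) ≤ (Nat.factorial k : ℝ))]
  rw [div_le_one (by positivity)]
  exact pc_abs k

lemma taylor_bound {x : ℝ} (hx0 : 0 < x) (N : ℕ) :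
    |f12 x - ∑ k ∈ Finset.range (N+1), genBinom (-(1:ℝ)/2) k * x ^ k| ≤ x ^ (N+1) := by
  have hcd : ContDiffOn ℝ N f12 (Icc 0 x) := contDiffOn_f12 N
  have hdiff : DifferentiableOn ℝ (iteratedDerivWithin N f12 (Icc 0 x)) (Ioo 0 x) := by
    apply DifferentiableOn.congr (f := fun t => pc N * (1+t) ^ (-(1:ℝ)/2 - N))
    · intro t ht
      exact ((hasDerivAt_aux _ t (le_of_lt ht.1)).const_mul (pc N)).differentiableAt.differentiableWithinAt
    · intro t ht
      exact itd hx0 N t (Ioo_subset_Icc_self ht)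
  obtain ⟨x', hx', heq⟩ := taylor_mean_remainder_lagrange hx0.ne (by rwa [uIcc_of_le hx0.le])
    (by rwa [uIcc_of_le hx0.le, uIoo_of_le hx0.le])
  rw [uIcc_of_le hx0.le] at heq
  rw [uIoo_of_le hx0.le] at hx'
  have htp : taylorWithinEval f12 N (Icc 0 x) 0 x
      = ∑ k ∈ Finset.range (N+1), genBinom (-(1:ℝ)/2) k * x ^ k := by
    rw [taylor_within_apply]
    apply Finset.sum_congr rfl
    intro k hk
    rw [itd hx0 k 0 (by constructor <;> simp [hx0.le])]
    rw [genBinom_eq]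
    simp [Real.one_rpow]
    ring
  rw [← htp, heq]
  rw [itd hx0 (N+1) x' (Ioo_subset_Icc_self hx')]
  rw [abs_div, abs_mul, abs_mul]
  have h1 : |(1 + x') ^ (-(1:ℝ)/2 - (N+1:ℕ))| ≤ 1 := by
    rw [abs_of_nonneg (Real.rpow_nonneg (by linarith [hx'.1]) _)]
    apply Real.rpow_le_one_of_one_le_of_nonpos (by linarith [hx'.1])
    have : (0:ℝ) ≤ (N+1:ℕ) := Nat.cast_nonneg _
    linarith
  have h2 : |x - 0| ^ (N+1) = x ^ (N+1) := by
    rw [sub_zero, abs_of_pos hx0]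
  calc |pc (N+1)| * |(1 + x') ^ (-(1:ℝ)/2 - (N+1:ℕ))| * |(x-0) ^ (N+1)| / |(Nat.factorial (N+1) : ℝ)|
      ≤ (Nat.factorial (N+1) : ℝ) * 1 * x ^ (N+1) / (Nat.factorial (N+1) : ℝ) := by
        rw [abs_of_nonneg (by positivity : (0:ℝ) ≤ ((Nat.factorial (N+1) : ℕ) : ℝ))]
        gcongr
        · exact pc_abs (N+1)
        · rw [abs_pow, h2]
    _ = x ^ (N+1) := by field_simp

lemma binomial_series {x : ℝ} (hx0 : 0 < x) (hx1 : x < 1) :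
    HasSum (fun k : ℕ => genBinom (-(1:ℝ)/2) k * x ^ k) (1 / Real.sqrt (1+x)) := by
  have hsum : Summable (fun k : ℕ => genBinom (-(1:ℝ)/2) k * x ^ k) := by
    apply Summable.of_norm_bounded (summable_geometric_of_lt_one hx0.le hx1)
    intro k
    rw [norm_mul, norm_pow, Real.norm_eq_abs, Real.norm_eq_abs, abs_of_pos hx0]
    calc |genBinom (-(1:ℝ)/2) k| * x ^ k ≤ 1 * x ^ k := by
          gcongr; exact genBinom_abs k
      _ = x ^ k := one_mul _
  have hfx : f12 x = 1 / Real.sqrt (1+x) := by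
    have h1 : (0:ℝ) ≤ 1 + x := by linarith
    rw [f12, Real.sqrt_eq_rpow, show (-(1:ℝ)/2) = -(1/2) by ring, Real.rpow_neg h1, one_div]
    norm_num
  rw [hsum.hasSum_iff_tendsto_nat]
  rw [← tendsto_add_atTop_iff_nat 1]
  have hsq : Tendsto (fun N : ℕ => x ^ (N+1)) atTop (nhds 0) := by
    have := tendsto_pow_atTop_nhds_zero_of_lt_one hx0.le hx1
    exact this.comp (tendsto_add_atTop_nat 1)
  rw [tendsto_iff_dist_tendsto_zero]
  apply squeeze_zero (fun N => dist_nonneg) _ hsq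
  intro N
  rw [Real.dist_eq, ← hfx, abs_sub_comm]
  exact taylor_bound hx0 N


/-- For `0 < μ < 2/5` and `n ≥ 1`, the series `Σ_k C(-1/2, k) I_{n,k} μ^{2k}`
converges, with sum `G_n`. -/
theorem G_series (μ : ℝ) (hμ0 : 0 < μ) (hμ : μ < 2 / 5) (n : ℕ) (hn : 1 ≤ n) :
    HasSum (fun k : ℕ => genBinom (-(1:ℝ)/2) k * I n k * μ ^ (2 * k)) (G μ n) := by
  have hπ : (0:ℝ) < π / 2 := by positivity
  set c : ℝ := (μ * (π/2))^2 with hc_def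
  have hc0 : 0 ≤ c := by positivity
  have hμπ : μ * (π/2) < 1 := by
    have h5 : π < 5 := by linarith [Real.pi_lt_d2]
    calc μ * (π/2) < (2/5) * (π/2) := mul_lt_mul_of_pos_right hμ hπ
      _ < 1 := by linarith
  have hc1 : c < 1 := by
    rw [hc_def]
    exact pow_lt_one₀ (by positivity) hμπ two_ne_zero
  set F : ℕ → ℝ → ℝ := fun k t =>
    genBinom (-(1:ℝ)/2) k * (t ^ (2*k+1) * Real.sin ((n:ℝ) * t)) * μ ^ (2*k) with hF
  have hIoc : Set.uIoc (0:ℝ) (π/2) = Ioc 0 (π/2) := Set.uIoc_of_le hπ.le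
  have key : HasSum (fun k : ℕ => ∫ t in (0:ℝ)..(π/2), F k t) (G μ n) := by
    apply intervalIntegral.hasSum_integral_of_dominated_convergence
      (fun k (t : ℝ) => (π/2) * c ^ k)
    · intro k
      apply Continuous.aestronglyMeasurable
      fun_prop
    · intro k
      filter_upwards with t ht
      rw [hIoc] at ht
      have ht0 : 0 < t := ht.1
      have ht2 : t ≤ π/2 := ht.2
      have hxc : (μ * t)^2 ≤ c := by
        rw [hc_def]
        exact pow_le_pow_left₀ (mul_nonneg hμ0.le ht0.le)
          (mul_le_mul_of_nonneg_left ht2 hμ0.le) 2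
      have h3 : (0:ℝ) ≤ t ^ (2*k+1) := pow_nonneg ht0.le _
      calc ‖F k t‖ = |genBinom (-(1:ℝ)/2) k| * (t ^ (2*k+1) * |Real.sin ((n:ℝ)*t)|)
            * μ ^ (2*k) := by
            rw [hF]
            simp [abs_mul, abs_pow, abs_of_pos hμ0, abs_of_pos ht0]
        _ ≤ 1 * (t ^ (2*k+1) * 1) * μ ^ (2*k) := by
            refine mul_le_mul ?_ le_rfl (by positivity) (by nlinarith)
            refine mul_le_mul (genBinom_abs k) ?_
              (mul_nonneg h3 (abs_nonneg _)) (by norm_num)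
            exact mul_le_mul le_rfl (Real.abs_sin_le_one _) (abs_nonneg _) h3
        _ = t * ((μ*t)^2) ^ k := by
            simp only [pow_mul, mul_pow, pow_succ]
            ring
        _ ≤ (π/2) * c ^ k :=
            mul_le_mul ht2 (pow_le_pow_left₀ (sq_nonneg _) hxc k)
              (pow_nonneg (sq_nonneg _) k) hπ.le
    · filter_upwards with t _
      exact (summable_geometric_of_lt_one hc0 hc1).mul_left _
    · exact intervalIntegrable_const
    · filter_upwards with t ht
      rw [hIoc] at ht
      have ht0 : 0 < t := ht.1
      have hx0 : 0 < (μ*t)^2 := by positivity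
      have hx1 : (μ*t)^2 < 1 := by
        have : (μ * t)^2 ≤ c := by
          rw [hc_def]
          exact pow_le_pow_left₀ (mul_nonneg hμ0.le ht0.le)
            (mul_le_mul_of_nonneg_left ht.2 hμ0.le) 2
        linarith
      have := (binomial_series hx0 hx1).mul_left (t * Real.sin ((n:ℝ)*t))
      convert this using 1
      · rfl
      · funext k
        rw [hF]
        simp only [pow_mul, mul_pow, pow_succ]
        ring
      · ring
  convert key using 2 with k
  have : (fun t => F k t) = fun t =>
      (genBinom (-(1:ℝ)/2) k * μ ^ (2*k)) * (t ^ (2*k+1) * Real.sin ((n:ℝ) * t)) := by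
    funext t; rw [hF]; ring
  rw [this, intervalIntegral.integral_const_mul, I]
  ring
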